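/- arXiv:2409.12079 — 3 statements merged into one kernel-verified Lean document; each statement's English description precedes it below -/
import Mathlib

section
/- The grade M of the Liouvillian Krylov space, i.e. the dimension of Span{Lᵏ(O) : k ∈ ℕ} with L(O) = [H,O], equals N_ω - N₁, where N_ω is the number of pairwise distinct transition frequencies ε_m - ε_n of the Hermitian matrix H and N₁ is the number of frequencies whose aggregated matrix component σ_P of O vanishes. -/
open Matrix

private lemma vmv_mulVec {N : ℕ} (w v x : Fin N → ℂ) :
    (vecMulVec w v).mulVec x = (v ⬝ᵥ x) • w := by
  funext i
  simp [Matrix.mulVec, vecMulVec, dotProduct, Finset.mul_sum, mul_assoc, mul_comm, mul_left_comm]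

private lemma mul_vmv {N : ℕ} (M : Matrix (Fin N) (Fin N) ℂ) (w v : Fin N → ℂ) :
    M * vecMulVec w v = vecMulVec (M.mulVec w) v := by
  ext i j
  simp [Matrix.mul_apply, vecMulVec, Matrix.mulVec, dotProduct, Finset.sum_mul, mul_assoc]

private lemma vmv_mul {N : ℕ} (w v : Fin N → ℂ) (M : Matrix (Fin N) (Fin N) ℂ) :
    vecMulVec w v * M = vecMulVec w (v ᵥ* M) := by
  ext i j
  simp [Matrix.mul_apply, vecMulVec, Matrix.vecMul, dotProduct, Finset.mul_sum, mul_assoc]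

private lemma vmv_mul_vmv {N : ℕ} (a b c d : Fin N → ℂ) :
    vecMulVec a b * vecMulVec c d = (b ⬝ᵥ c) • vecMulVec a d := by
  ext i j
  simp [Matrix.mul_apply, vecMulVec, dotProduct, Finset.sum_mul, Finset.mul_sum, mul_assoc,
    mul_comm, mul_left_comm]

private lemma completeness {N : ℕ} (φ : Fin N → (Fin N → ℂ))
    (horth : ∀ i j, star (φ i) ⬝ᵥ φ j = if i = j then 1 else 0) :
    ∑ m : Fin N, vecMulVec (φ m) (star (φ m)) = 1 := by
  set U : Matrix (Fin N) (Fin N) ℂ := Matrix.of (fun m i => φ m i) with hU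
  have h1 : U * Uᴴ = 1 := by
    ext i j
    have := horth j i
    simp only [dotProduct, Pi.star_apply] at this
    simp only [Matrix.mul_apply, Matrix.one_apply, conjTranspose_apply, hU, Matrix.of_apply]
    rw [show (∑ k, φ i k * star (φ j k)) = ∑ k, star (φ j k) * φ i k from
      Finset.sum_congr rfl fun k _ => mul_comm _ _, this]
    simp [eq_comm]
  have h2 : Uᴴ * U = 1 := mul_eq_one_comm.mp h1
  ext i j
  have := congrFun (congrFun h2 i) j
  simp only [Matrix.mul_apply, conjTranspose_apply, hU, Matrix.of_apply, Matrix.one_apply] at this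
  have hstar := congrArg (starRingEnd ℂ) this
  simp only [map_sum, _root_.map_mul, MonoidWithZeroHom.map_ite_one_zero, Complex.conj_conj,
    starRingEnd_apply, star_star] at hstar
  rw [show ∑ x : Fin N, φ x i * star (φ x j) = ∑ x : Fin N, star (star (φ x i)) * star (φ x j)
    by simp] at hstar
  rw [show ((1 : Matrix (Fin N) (Fin N) ℂ) i j) = if i = j then 1 else 0 from Matrix.one_apply,
    Matrix.sum_apply]
  simp only [vecMulVec_apply, Pi.star_apply, starRingEnd_apply, star_star] at hstar ⊢
  exact hstar

/-- The matrix-element functional `M ↦ ⟨φ m | M | φ n⟩` as a linear map. -/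
private noncomputable def entryFun {N : ℕ} (φ : Fin N → (Fin N → ℂ)) (m n : Fin N) :
    Matrix (Fin N) (Fin N) ℂ →ₗ[ℂ] ℂ where
  toFun M := star (φ m) ⬝ᵥ M.mulVec (φ n)
  map_add' A B := by simp only [Matrix.add_mulVec, dotProduct_add]
  map_smul' a A := by
    simp only [RingHom.id_apply, smul_eq_mul]
    rw [Matrix.smul_mulVec, dotProduct_smul, smul_eq_mul]

private lemma entryFun_apply {N : ℕ} (φ : Fin N → (Fin N → ℂ)) (m n : Fin N)
    (M : Matrix (Fin N) (Fin N) ℂ) : entryFun φ m n M = star (φ m) ⬝ᵥ M.mulVec (φ n) := rfl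

/-- The grade `M` of the Liouvillian Krylov space, i.e. the dimension of
`Span{Lᵏ(O) : k ∈ ℕ}` with `L(A) = [H,A]`, equals `N_ω - N₁`, the number of pairwise
distinct transition frequencies minus the number of vanishing components `σ_P`. -/
theorem liouvillian_krylov_grade {N Nω : ℕ}
    (H O : Matrix (Fin N) (Fin N) ℂ) (hH : H.IsHermitian)
    (φ : Fin N → (Fin N → ℂ)) (ε : Fin N → ℝ)
    (heig : ∀ j, H.mulVec (φ j) = (ε j : ℂ) • φ j)
    (horth : ∀ i j, star (φ i) ⬝ᵥ φ j = if i = j then 1 else 0)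
    (ω : Fin Nω → ℝ) (hωinj : Function.Injective ω)
    (hωrange : Set.range ω = {x : ℝ | ∃ m n, x = ε m - ε n})
    (σ : Fin Nω → Matrix (Fin N) (Fin N) ℂ)
    (hσ : ∀ P, σ P = ∑ m : Fin N, ∑ n : Fin N,
      if ε m - ε n = ω P then
        (star (φ m) ⬝ᵥ O.mulVec (φ n)) • vecMulVec (φ m) (star (φ n))
      else 0) :
    Module.finrank ℂ
        (Submodule.span ℂ (Set.range fun k : ℕ =>
          (fun A : Matrix (Fin N) (Fin N) ℂ => H * A - A * H)^[k] O)) =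
      Nω - Fintype.card {P : Fin Nω // σ P = 0} := by
  classical
  have hcompl := completeness φ horth
  -- decomposition of arbitrary matrices
  have hdecomp : ∀ M : Matrix (Fin N) (Fin N) ℂ, M = ∑ m : Fin N, ∑ n : Fin N,
      (star (φ m) ⬝ᵥ M.mulVec (φ n)) • vecMulVec (φ m) (star (φ n)) := by
    intro M
    have key : ∀ m n : Fin N,
        vecMulVec (φ m) (star (φ m)) * M * vecMulVec (φ n) (star (φ n)) =
        (star (φ m) ⬝ᵥ M.mulVec (φ n)) • vecMulVec (φ m) (star (φ n)) := by
      intro m n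
      rw [Matrix.mul_assoc, mul_vmv, vmv_mul_vmv]
    calc M = 1 * M * 1 := by simp
      _ = (∑ m : Fin N, vecMulVec (φ m) (star (φ m))) * M *
            (∑ n : Fin N, vecMulVec (φ n) (star (φ n))) := by rw [hcompl]
      _ = ∑ m : Fin N, ∑ n : Fin N,
            vecMulVec (φ m) (star (φ m)) * M * vecMulVec (φ n) (star (φ n)) := by
          simp only [Finset.sum_mul, Finset.mul_sum]
          exact Finset.sum_comm
      _ = _ := Finset.sum_congr rfl fun m _ => Finset.sum_congr rfl fun n _ => key m n
  -- every transition frequency is hit by ω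
  have hωexists : ∀ m n : Fin N, ∃ P, ω P = ε m - ε n := by
    intro m n
    have : (ε m - ε n) ∈ Set.range ω := by rw [hωrange]; exact ⟨m, n, rfl⟩
    exact this
  -- O is the sum of the σ P
  have hOsum : O = ∑ P : Fin Nω, σ P := by
    have hcollapse : ∀ m n : Fin N,
        (∑ P : Fin Nω, if ε m - ε n = ω P then
          (star (φ m) ⬝ᵥ O.mulVec (φ n)) • vecMulVec (φ m) (star (φ n)) else 0) =
        (star (φ m) ⬝ᵥ O.mulVec (φ n)) • vecMulVec (φ m) (star (φ n)) := by
      intro m n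
      obtain ⟨P₀, hP₀⟩ := hωexists m n
      rw [Finset.sum_eq_single P₀]
      · rw [if_pos hP₀.symm]
      · intro Q _ hQ
        rw [if_neg]
        intro hc
        exact hQ (hωinj (by rw [hP₀, hc]))
      · intro h; exact absurd (Finset.mem_univ P₀) h
    calc O = ∑ m : Fin N, ∑ n : Fin N,
          (star (φ m) ⬝ᵥ O.mulVec (φ n)) • vecMulVec (φ m) (star (φ n)) := hdecomp O
      _ = ∑ m : Fin N, ∑ n : Fin N, ∑ P : Fin Nω,
          (if ε m - ε n = ω P then
            (star (φ m) ⬝ᵥ O.mulVec (φ n)) • vecMulVec (φ m) (star (φ n)) else 0) := by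
          exact Finset.sum_congr rfl fun m _ => Finset.sum_congr rfl fun n _ =>
            (hcollapse m n).symm
      _ = ∑ m : Fin N, ∑ P : Fin Nω, ∑ n : Fin N,
          (if ε m - ε n = ω P then
            (star (φ m) ⬝ᵥ O.mulVec (φ n)) • vecMulVec (φ m) (star (φ n)) else 0) :=
          Finset.sum_congr rfl fun m _ => Finset.sum_comm
      _ = ∑ P : Fin Nω, ∑ m : Fin N, ∑ n : Fin N,
          (if ε m - ε n = ω P then
            (star (φ m) ⬝ᵥ O.mulVec (φ n)) • vecMulVec (φ m) (star (φ n)) else 0) :=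
          Finset.sum_comm
      _ = ∑ P : Fin Nω, σ P := Finset.sum_congr rfl fun P _ => (hσ P).symm
  -- commutator acts on vecMulVec
  have hleft : ∀ n : Fin N, star (φ n) ᵥ* H = ((ε n : ℂ)) • star (φ n) := by
    intro n
    have := congrArg star (heig n)
    rw [Matrix.star_mulVec, hH.eq, star_smul] at this
    simpa using this
  have hLvmv : ∀ m n : Fin N,
      H * vecMulVec (φ m) (star (φ n)) - vecMulVec (φ m) (star (φ n)) * H =
      ((ε m : ℂ) - (ε n : ℂ)) • vecMulVec (φ m) (star (φ n)) := by
    intro m n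
    rw [mul_vmv, heig m, vmv_mul, hleft n, sub_smul]
    congr 1 <;> ext i j <;>
      simp [vecMulVec_apply, mul_assoc, mul_comm, mul_left_comm]
  -- σ P is an eigenvector of the Liouvillian
  have hLσ : ∀ P, H * σ P - σ P * H = ((ω P : ℝ) : ℂ) • σ P := by
    intro P
    rw [hσ P]
    simp only [Finset.mul_sum, Finset.sum_mul, ← Finset.sum_sub_distrib, Finset.smul_sum]
    refine Finset.sum_congr rfl fun m _ => Finset.sum_congr rfl fun n _ => ?_
    by_cases h : ε m - ε n = ω P
    · simp only [if_pos h]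
      rw [mul_smul_comm, smul_mul_assoc, ← smul_sub, hLvmv m n, smul_comm]
      congr 2
      rw [← h]
      push_cast
      ring
    · simp only [if_neg h]
      simp
  -- the Krylov iterates
  have hiter : ∀ k : ℕ, (fun A : Matrix (Fin N) (Fin N) ℂ => H * A - A * H)^[k] O =
      ∑ P : Fin Nω, (((ω P : ℝ) : ℂ)) ^ k • σ P := by
    intro k
    induction k with
    | zero => simpa using hOsum
    | succ k ih =>
      rw [Function.iterate_succ_apply', ih]
      simp only [Finset.mul_sum, Finset.sum_mul, ← Finset.sum_sub_distrib]
      refine Finset.sum_congr rfl fun P _ => ?_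
      rw [mul_smul_comm, smul_mul_assoc, ← smul_sub, hLσ P, smul_smul, ← pow_succ]
  -- matrix elements of σ Q
  have hfσ : ∀ (m n : Fin N) (Q : Fin Nω), entryFun φ m n (σ Q) =
      if ε m - ε n = ω Q then star (φ m) ⬝ᵥ O.mulVec (φ n) else 0 := by
    intro m n Q
    rw [hσ Q, map_sum]
    have hterm : ∀ a b : Fin N,
        entryFun φ m n (if ε a - ε b = ω Q then
          (star (φ a) ⬝ᵥ O.mulVec (φ b)) • vecMulVec (φ a) (star (φ b)) else 0) =
        if a = m then (if b = n then
          (if ε a - ε b = ω Q then star (φ a) ⬝ᵥ O.mulVec (φ b) else 0) else 0) else 0 := by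
      intro a b
      have hval : entryFun φ m n (if ε a - ε b = ω Q then
          (star (φ a) ⬝ᵥ O.mulVec (φ b)) • vecMulVec (φ a) (star (φ b)) else 0) =
          (if ε a - ε b = ω Q then star (φ a) ⬝ᵥ O.mulVec (φ b) else 0) *
            ((if b = n then 1 else 0) * (if m = a then 1 else 0)) := by
        by_cases hc : ε a - ε b = ω Q
        · rw [if_pos hc, if_pos hc, _root_.map_smul, entryFun_apply, vmv_mulVec,
            dotProduct_smul, horth b n, horth m a, smul_eq_mul, smul_eq_mul]
        · rw [if_neg hc, if_neg hc, map_zero, zero_mul]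
      rw [hval]
      by_cases ham : a = m
      · subst ham
        by_cases hbn : b = n
        · subst hbn; simp
        · simp [hbn]
      · simp [ham, Ne.symm ham]
    calc (∑ a : Fin N, entryFun φ m n (∑ b : Fin N, if ε a - ε b = ω Q then
          (star (φ a) ⬝ᵥ O.mulVec (φ b)) • vecMulVec (φ a) (star (φ b)) else 0))
        = ∑ a : Fin N, ∑ b : Fin N, (if a = m then (if b = n then
            (if ε a - ε b = ω Q then star (φ a) ⬝ᵥ O.mulVec (φ b) else 0) else 0) else 0) := by
          refine Finset.sum_congr rfl fun a _ => ?_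
          rw [map_sum]
          exact Finset.sum_congr rfl fun b _ => hterm a b
      _ = if ε m - ε n = ω Q then star (φ m) ⬝ᵥ O.mulVec (φ n) else 0 := by
          simp [Finset.sum_ite_eq]
  -- a nonvanishing σ P has a nonvanishing matrix element at its own frequency
  have hcnonzero : ∀ P, σ P ≠ 0 →
      ∃ m n, ε m - ε n = ω P ∧ star (φ m) ⬝ᵥ O.mulVec (φ n) ≠ 0 := by
    intro P hP
    by_contra hcon
    push_neg at hcon
    apply hP
    rw [hσ P]
    refine Finset.sum_eq_zero fun m _ => Finset.sum_eq_zero fun n _ => ?_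
    by_cases h : ε m - ε n = ω P
    · rw [if_pos h, hcon m n h, zero_smul]
    · rw [if_neg h]
  set Lf : ℕ → Matrix (Fin N) (Fin N) ℂ :=
    fun k => (fun A : Matrix (Fin N) (Fin N) ℂ => H * A - A * H)^[k] O with hLf
  -- span of iterates ⊆ span of σ's
  have hsub1 : Submodule.span ℂ (Set.range Lf) ≤ Submodule.span ℂ (Set.range σ) := by
    rw [Submodule.span_le]
    rintro _ ⟨k, rfl⟩
    have : Lf k = ∑ P : Fin Nω, (((ω P : ℝ) : ℂ)) ^ k • σ P := hiter k
    rw [this]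
    exact Submodule.sum_mem _ fun P _ =>
      Submodule.smul_mem _ _ (Submodule.subset_span ⟨P, rfl⟩)
  -- Vandermonde: span of σ's ⊆ span of iterates
  have hsub2 : Submodule.span ℂ (Set.range σ) ≤ Submodule.span ℂ (Set.range Lf) := by
    rw [Submodule.span_le]
    rintro _ ⟨Q, rfl⟩
    set v : Fin Nω → ℂ := fun P => ((ω P : ℝ) : ℂ) with hv
    have hvinj : Function.Injective v := fun a b h => hωinj (Complex.ofReal_injective h)
    have hdet : (Matrix.vandermonde v).det ≠ 0 := Matrix.det_vandermonde_ne_zero_iff.mpr hvinj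
    have hVinv : Matrix.vandermonde v * (Matrix.vandermonde v)⁻¹ = 1 :=
      Matrix.mul_nonsing_inv _ (isUnit_iff_ne_zero.mpr hdet)
    have hLfV : ∀ k : Fin Nω, Lf (k : ℕ) = ∑ P : Fin Nω, (Matrix.vandermonde v) P k • σ P := by
      intro k
      refine (hiter (k : ℕ)).trans ?_
      refine Finset.sum_congr rfl fun P _ => ?_
      rw [Matrix.vandermonde_apply, hv]
    have key : σ Q = ∑ k : Fin Nω, ((Matrix.vandermonde v)⁻¹ k Q) • Lf (k : ℕ) := by
      calc σ Q = ∑ P : Fin Nω, ((1 : Matrix (Fin Nω) (Fin Nω) ℂ) P Q) • σ P := by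
            simp [Matrix.one_apply, ite_smul, Finset.sum_ite_eq]
        _ = ∑ P : Fin Nω, ((Matrix.vandermonde v * (Matrix.vandermonde v)⁻¹) P Q) • σ P := by
            rw [hVinv]
        _ = ∑ P : Fin Nω, ∑ k : Fin Nω,
              ((Matrix.vandermonde v) P k * (Matrix.vandermonde v)⁻¹ k Q) • σ P := by
            refine Finset.sum_congr rfl fun P _ => ?_
            rw [Matrix.mul_apply, Finset.sum_smul]
        _ = ∑ k : Fin Nω, ∑ P : Fin Nω,
              ((Matrix.vandermonde v)⁻¹ k Q) • ((Matrix.vandermonde v) P k • σ P) := by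
            rw [Finset.sum_comm]
            exact Finset.sum_congr rfl fun P _ => Finset.sum_congr rfl fun k _ => by
              rw [smul_smul, mul_comm]
        _ = ∑ k : Fin Nω, ((Matrix.vandermonde v)⁻¹ k Q) • Lf (k : ℕ) := by
            refine Finset.sum_congr rfl fun k _ => ?_
            rw [hLfV k, Finset.smul_sum]
    rw [key]
    exact Submodule.sum_mem _ fun k _ =>
      Submodule.smul_mem _ _ (Submodule.subset_span ⟨(k : ℕ), rfl⟩)
  -- restrict σ to its nonvanishing part
  have hspanσ : Submodule.span ℂ (Set.range σ) =
      Submodule.span ℂ (Set.range fun t : {P : Fin Nω // σ P ≠ 0} => σ t.1) := by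
    refine le_antisymm ?_ (Submodule.span_mono ?_)
    · rw [Submodule.span_le]
      rintro _ ⟨P, rfl⟩
      by_cases h : σ P = 0
      · rw [h]; exact Submodule.zero_mem _
      · exact Submodule.subset_span ⟨⟨P, h⟩, rfl⟩
    · rintro _ ⟨t, rfl⟩
      exact ⟨t.1, rfl⟩
  -- the nonvanishing σ's are linearly independent
  have hli : LinearIndependent ℂ (fun t : {P : Fin Nω // σ P ≠ 0} => σ t.1) := by
    rw [Fintype.linearIndependent_iff]
    intro g hg t
    obtain ⟨m, n, hmn, hc⟩ := hcnonzero t.1 t.2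
    have h0 := congrArg (entryFun φ m n) hg
    rw [map_sum, map_zero] at h0
    simp only [_root_.map_smul, smul_eq_mul, hfσ] at h0
    rw [Finset.sum_eq_single t] at h0
    · rw [if_pos hmn] at h0
      exact (mul_eq_zero.mp h0).resolve_right hc
    · intro t' _ htt
      rw [if_neg, mul_zero]
      intro hcond
      exact htt (Subtype.ext (hωinj (by rw [← hcond, ← hmn])))
    · intro h; exact absurd (Finset.mem_univ t) h
  have hrank : Module.finrank ℂ (Submodule.span ℂ (Set.range Lf)) =
      Fintype.card {P : Fin Nω // σ P ≠ 0} := by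
    rw [le_antisymm hsub1 hsub2, hspanσ]
    exact finrank_span_eq_card hli
  rw [hrank]
  have := Fintype.card_subtype_compl (fun P : Fin Nω => σ P = 0)
  simp only [Fintype.card_fin] at this
  convert this using 2
end

section
/- There is no subspace W of ℂᴺ with dim(W) < m such that exp(-iHt)|ψ₀⟩ ∈ W for all t ∈ ℝ, where m = dim(Span{Hᵏ|ψ₀⟩ : k ∈ ℕ}); i.e., the Krylov state space is minimal among subspaces containing the entire time-evolution orbit. -/
open Matrix

/-- Minimality of the Krylov state space: any subspace `W` of `ℂᴺ` containing the entire
time-evolution orbit `exp(-iHt)|ψ₀⟩` for all `t ∈ ℝ` has dimension at least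
`m = dim Span{Hᵏ|ψ₀⟩ : k ∈ ℕ}`. -/
theorem krylov_state_space_minimal {N : ℕ} (H : Matrix (Fin N) (Fin N) ℂ)
    (hH : H.IsHermitian) (ψ₀ : Fin N → ℂ) (W : Submodule ℂ (Fin N → ℂ))
    (hW : ∀ t : ℝ, (NormedSpace.exp ((-(Complex.I * (t : ℂ))) • H)).mulVec ψ₀ ∈ W) :
    Module.finrank ℂ
        (Submodule.span ℂ (Set.range fun k : ℕ => (H ^ k).mulVec ψ₀)) ≤
      Module.finrank ℂ W := by
  classical
  letI : SeminormedRing (Matrix (Fin N) (Fin N) ℂ) := Matrix.linftyOpSemiNormedRing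
  letI : NormedRing (Matrix (Fin N) (Fin N) ℂ) := Matrix.linftyOpNormedRing
  letI : NormedAlgebra ℝ (Matrix (Fin N) (Fin N) ℂ) := Matrix.linftyOpNormedAlgebra
  have hclosed : IsClosed (W : Set (Fin N → ℂ)) := Submodule.closed_of_finiteDimensional W
  set x : Matrix (Fin N) (Fin N) ℂ := (-Complex.I) • H with hx
  have hsm : ∀ u : ℝ, u • x = (-(Complex.I * (u : ℂ))) • H := by
    intro u
    rw [hx, ← smul_assoc]
    congr 1
    rw [Complex.real_smul]
    ring
  have hexp : ∀ u : ℝ, NormedSpace.exp (u • x) =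
      NormedSpace.exp ((-(Complex.I * (u : ℂ))) • H) := by
    intro u
    rw [hsm]
  have hWx : ∀ t : ℝ, (NormedSpace.exp (t • x)).mulVec ψ₀ ∈ W := by
    intro t; rw [hexp]; exact hW t
  have hcomm : ∀ t : ℝ, Commute H (NormedSpace.exp (t • x)) := by
    intro t
    exact (((Commute.refl H).smul_right (-Complex.I)).smul_right t).exp_right
  have hxE : ∀ A E : Matrix (Fin N) (Fin N) ℂ,
      A * (E * x) = (-Complex.I) • (A * (E * H)) := by
    intro A E
    rw [hx, mul_smul_comm, mul_smul_comm]
  -- key claim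
  have key : ∀ k : ℕ, ∀ t : ℝ,
      ((H ^ k) * NormedSpace.exp (t • x)).mulVec ψ₀ ∈ W := by
    intro k
    induction k with
    | zero => intro t; simpa using hWx t
    | succ k ih =>
      intro t
      let L₀ : Matrix (Fin N) (Fin N) ℂ →ₗ[ℝ] (Fin N → ℂ) :=
        { toFun := fun M => ((H ^ k) * M).mulVec ψ₀
          map_add' := by
            intro M₁ M₂
            simp [Matrix.mul_add, Matrix.add_mulVec]
          map_smul' := by
            intro c M
            simp [Matrix.mul_smul, Matrix.smul_mulVec] }
      let L : Matrix (Fin N) (Fin N) ℂ →L[ℝ] (Fin N → ℂ) := L₀.toContinuousLinearMap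
      have hf : ∀ s : ℝ, HasDerivAt
          (fun u : ℝ => ((H ^ k) * NormedSpace.exp (u • x)).mulVec ψ₀)
          (((H ^ k) * (NormedSpace.exp (s • x) * x)).mulVec ψ₀) s := by
        intro s
        exact L.hasFDerivAt.comp_hasDerivAt s (hasDerivAt_exp_smul_const x s)
      have hderiv_mem : (((H ^ k) * (NormedSpace.exp (t • x) * x)).mulVec ψ₀) ∈ W := by
        have htend := hasDerivAt_iff_tendsto_slope.mp (hf t)
        refine hclosed.mem_of_tendsto htend ?_
        filter_upwards with u
        exact W.smul_mem _ (W.sub_mem (ih u) (ih t))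
      have hrw : ((H ^ k) * (NormedSpace.exp (t • x) * x)).mulVec ψ₀ =
          (-Complex.I) • ((H ^ (k + 1)) * NormedSpace.exp (t • x)).mulVec ψ₀ := by
        rw [hxE]
        rw [show (H ^ k) * (NormedSpace.exp (t • x) * H) =
            (H ^ (k + 1)) * NormedSpace.exp (t • x) by
          rw [← (hcomm t).eq, ← mul_assoc, ← pow_succ]]
        rw [Matrix.smul_mulVec]
      rw [hrw] at hderiv_mem
      have := W.smul_mem (Complex.I) hderiv_mem
      rwa [smul_smul, mul_neg, Complex.I_mul_I, neg_neg, one_smul] at this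
  have hspan : Submodule.span ℂ (Set.range fun k : ℕ => (H ^ k).mulVec ψ₀) ≤ W := by
    rw [Submodule.span_le]
    rintro _ ⟨k, rfl⟩
    have := key k 0
    simpa using this
  exact Submodule.finrank_mono hspan
end

section
/- If H is Hermitian with d pairwise distinct eigenvalues, then the number N_ω of pairwise distinct transition frequencies ε_m - ε_n satisfies d ≤ N_ω ≤ d² - d + 1, and the minimal polynomial degree of the Liouvillian superoperator L(·) = [H, ·] on the full matrix space equals N_ω. -/
open Matrix Polynomial

private lemma end_pow_apply' {R M : Type*} [CommRing R] [AddCommGroup M] [Module R M]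
    (f : Module.End R M) (c : R) (x : M) (hx : f x = c • x) (n : ℕ) :
    (f ^ n) x = c ^ n • x := by
  induction n with
  | zero => simp
  | succ n ih =>
    rw [pow_succ, Module.End.mul_apply, hx, _root_.map_smul, ih, smul_smul, pow_succ, mul_comm]

private lemma end_aeval_apply' {R M : Type*} [CommRing R] [AddCommGroup M] [Module R M]
    (f : Module.End R M) (c : R) (x : M) (hx : f x = c • x) (p : R[X]) :
    (Polynomial.aeval f p) x = p.eval c • x := by
  induction p using Polynomial.induction_on' with
  | add p q hp hq => simp [hp, hq, add_smul]
  | monomial n a =>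
    rw [aeval_monomial, eval_monomial, Module.End.mul_apply,
      end_pow_apply' f c x hx n, _root_.map_smul, Module.algebraMap_end_apply, smul_smul, mul_comm]

/-- For a Hermitian `H` with exactly `d` pairwise distinct eigenvalues, the number `N_ω`
of pairwise distinct transition frequencies `ε_m - ε_n` satisfies `d ≤ N_ω ≤ d² - d + 1`,
and the degree of the minimal polynomial of the Liouvillian `L(A) = HA - AH` on the full
matrix space equals `N_ω`. -/
theorem transition_frequencies_and_minpoly_degree {N d Nω : ℕ} (hN : 0 < N)
    (H : Matrix (Fin N) (Fin N) ℂ) (hH : H.IsHermitian)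
    (φ : Fin N → (Fin N → ℂ)) (ε : Fin N → ℝ)
    (heig : ∀ j, H.mulVec (φ j) = (ε j : ℂ) • φ j)
    (horth : ∀ i j, star (φ i) ⬝ᵥ φ j = if i = j then 1 else 0)
    (εd : Fin d → ℝ) (hdinj : Function.Injective εd)
    (hdrange : Set.range εd = Set.range ε)
    (ω : Fin Nω → ℝ) (hωinj : Function.Injective ω)
    (hωrange : Set.range ω = {x : ℝ | ∃ m n, x = εd m - εd n}) :
    d ≤ Nω ∧ Nω ≤ d ^ 2 - d + 1 ∧
      (minpoly ℂ
          (LinearMap.mulLeft ℂ H - LinearMap.mulRight ℂ H :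
            Module.End ℂ (Matrix (Fin N) (Fin N) ℂ))).natDegree = Nω := by
  classical
  have hd : 0 < d := by
    rcases Nat.eq_zero_or_pos d with h | h
    · exfalso
      have : ε ⟨0, hN⟩ ∈ Set.range εd := by rw [hdrange]; exact ⟨⟨0, hN⟩, rfl⟩
      obtain ⟨m, _⟩ := this
      exact absurd m.2 (by omega)
    · exact h
  -- the finset of transition frequencies
  set T : Finset ℝ := Finset.univ.image ω with hT
  have hTcard : T.card = Nω := by
    rw [hT, Finset.card_image_of_injective _ hωinj, Finset.card_univ, Fintype.card_fin]
  have hmemT : ∀ m n, εd m - εd n ∈ T := by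
    intro m n
    have : εd m - εd n ∈ Set.range ω := by rw [hωrange]; exact ⟨m, n, rfl⟩
    obtain ⟨i, hi⟩ := this
    exact hT ▸ Finset.mem_image.mpr ⟨i, Finset.mem_univ _, hi⟩
  have h1 : d ≤ Nω := by
    have hinj : Function.Injective (fun m : Fin d => εd m - εd ⟨0, hd⟩) := by
      intro a b hab
      exact hdinj (by simpa using sub_left_injective hab)
    have hsub : Finset.univ.image (fun m : Fin d => εd m - εd ⟨0, hd⟩) ⊆ T := by
      intro x hx
      obtain ⟨m, _, rfl⟩ := Finset.mem_image.mp hx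
      exact hmemT m ⟨0, hd⟩
    calc d = (Finset.univ.image (fun m : Fin d => εd m - εd ⟨0, hd⟩)).card := by
            rw [Finset.card_image_of_injective _ hinj, Finset.card_univ, Fintype.card_fin]
      _ ≤ T.card := Finset.card_le_card hsub
      _ = Nω := hTcard
  have h2 : Nω ≤ d ^ 2 - d + 1 := by
    have hsub : T ⊆ insert (0 : ℝ)
        ((Finset.univ : Finset (Fin d)).offDiag.image fun p => εd p.1 - εd p.2) := by
      intro x hx
      obtain ⟨i, _, rfl⟩ := Finset.mem_image.mp (hT ▸ hx)
      have : ω i ∈ Set.range ω := ⟨i, rfl⟩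
      rw [hωrange] at this
      obtain ⟨m, n, hmn⟩ := this
      rcases eq_or_ne m n with rfl | hne
      · simp [hmn]
      · exact Finset.mem_insert_of_mem <| Finset.mem_image.mpr
          ⟨(m, n), Finset.mem_offDiag.mpr ⟨Finset.mem_univ _, Finset.mem_univ _, hne⟩, hmn.symm⟩
    have hsq : d ^ 2 = d * d := sq d
    have := Finset.card_le_card hsub
    have h3 := Finset.card_insert_le (0 : ℝ)
        ((Finset.univ : Finset (Fin d)).offDiag.image fun p => εd p.1 - εd p.2)
    have h4 := Finset.card_image_le (s := (Finset.univ : Finset (Fin d)).offDiag)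
        (f := fun p => εd p.1 - εd p.2)
    have h5 : ((Finset.univ : Finset (Fin d)).offDiag).card = d * d - d := by
      rw [Finset.offDiag_card, Finset.card_univ, Fintype.card_fin]
    omega
  refine ⟨h1, h2, ?_⟩
  -- eigen-matrices
  set Lop : Module.End ℂ (Matrix (Fin N) (Fin N) ℂ) :=
    LinearMap.mulLeft ℂ H - LinearMap.mulRight ℂ H with hLop
  set M : Fin N → Fin N → Matrix (Fin N) (Fin N) ℂ :=
    fun j k => Matrix.of fun a b => φ j a * star (φ k b) with hM
  have hHM : ∀ j k, H * M j k = (ε j : ℂ) • M j k := by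
    intro j k
    ext a b
    have h := congrFun (heig j) a
    simp only [mulVec, dotProduct, Pi.smul_apply, smul_eq_mul] at h
    simp only [hM, Matrix.mul_apply, Matrix.of_apply, Matrix.smul_apply, smul_eq_mul]
    calc ∑ c, H a c * (φ j c * star (φ k b)) = (∑ c, H a c * φ j c) * star (φ k b) := by
          rw [Finset.sum_mul]; exact Finset.sum_congr rfl fun c _ => by ring
      _ = (ε j : ℂ) * (φ j a * star (φ k b)) := by rw [h]; ring
  have hMH : ∀ j k, M j k * H = (ε k : ℂ) • M j k := by
    intro j k
    ext a b
    have h := congrFun (heig k) b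
    simp only [mulVec, dotProduct, Pi.smul_apply, smul_eq_mul] at h
    have hst : ∀ c b, H c b = star (H b c) := by
      intro c b
      conv_lhs => rw [← hH]
      simp [conjTranspose_apply]
    simp only [hM, Matrix.mul_apply, Matrix.of_apply, Matrix.smul_apply, smul_eq_mul]
    calc ∑ c, φ j a * star (φ k c) * H c b
        = φ j a * star (∑ c, H b c * φ k c) := by
          rw [star_sum, Finset.mul_sum]
          exact Finset.sum_congr rfl fun c _ => by rw [hst c b]; simp; ring
      _ = φ j a * star ((ε k : ℂ) * φ k b) := by rw [h]
      _ = (ε k : ℂ) * (φ j a * star (φ k b)) := by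
          rw [star_mul']
          simp [Complex.star_def]
          ring
  have hLM : ∀ j k, Lop (M j k) = ((ε j - ε k : ℝ) : ℂ) • M j k := by
    intro j k
    rw [hLop]
    simp only [LinearMap.sub_apply, LinearMap.mulLeft_apply, LinearMap.mulRight_apply,
      hHM j k, hMH j k]
    rw [← sub_smul]
    push_cast
    ring_nf
  -- nonvanishing of eigen-matrices
  have hφne : ∀ j, ∃ a, φ j a ≠ 0 := by
    intro j
    by_contra hcon
    push_neg at hcon
    have := horth j j
    simp only [dotProduct, Pi.star_apply] at this
    rw [Finset.sum_eq_zero (fun a _ => by rw [hcon a]; ring)] at this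
    simp at this
  have hMne : ∀ j k, M j k ≠ 0 := by
    intro j k hcon
    obtain ⟨a, ha⟩ := hφne j
    obtain ⟨b, hb⟩ := hφne k
    have := congrFun (congrFun hcon a) b
    simp only [hM, Matrix.of_apply, Matrix.zero_apply, mul_eq_zero, star_eq_zero] at this
    tauto
  -- the unitary from the eigenbasis, and spanning
  set U : Matrix (Fin N) (Fin N) ℂ := Matrix.of fun a j => φ j a with hUdef
  have hU1 : Uᴴ * U = 1 := by
    ext i j
    have := horth i j
    simp only [dotProduct, Pi.star_apply, Complex.star_def] at this
    simp [Matrix.mul_apply, conjTranspose_apply, hUdef, Matrix.one_apply, this]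
  have hU2 : U * Uᴴ = 1 := mul_eq_one_comm.mp hU1
  have hdecomp : ∀ A : Matrix (Fin N) (Fin N) ℂ,
      A = ∑ j : Fin N, ∑ k : Fin N, (Uᴴ * A * U) j k • M j k := by
    intro A
    have h1 : U * (Uᴴ * A * U) * Uᴴ = A := by
      have : U * (Uᴴ * A * U) * Uᴴ = (U * Uᴴ) * A * (U * Uᴴ) := by
        simp only [Matrix.mul_assoc]
      rw [this, hU2, Matrix.one_mul, Matrix.mul_one]
    conv_lhs => rw [← h1]
    generalize (Uᴴ * A * U) = B
    ext a b
    simp only [Matrix.mul_apply, conjTranspose_apply, hUdef, Matrix.of_apply,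
      Matrix.sum_apply, Matrix.smul_apply, hM, smul_eq_mul, Finset.sum_mul, Finset.mul_sum]
    rw [Finset.sum_comm]
    exact Finset.sum_congr rfl fun j _ => Finset.sum_congr rfl fun k _ => by ring
  have hspan : ∀ A : Matrix (Fin N) (Fin N) ℂ,
      A ∈ Submodule.span ℂ (Set.range fun p : Fin N × Fin N => M p.1 p.2) := by
    intro A
    rw [hdecomp A]
    exact Submodule.sum_mem _ fun j _ => Submodule.sum_mem _ fun k _ =>
      Submodule.smul_mem _ _ (Submodule.subset_span ⟨(j, k), rfl⟩)
  -- frequencies of eigen-pairs are transition frequencies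
  have hfreq : ∀ j k : Fin N, ∃ i, ω i = ε j - ε k := by
    intro j k
    have hj : ε j ∈ Set.range εd := by rw [hdrange]; exact ⟨j, rfl⟩
    have hk : ε k ∈ Set.range εd := by rw [hdrange]; exact ⟨k, rfl⟩
    obtain ⟨m, hm⟩ := hj
    obtain ⟨n, hn⟩ := hk
    have : ε j - ε k ∈ Set.range ω := by rw [hωrange]; exact ⟨m, n, by rw [hm, hn]⟩
    obtain ⟨i, hi⟩ := this
    exact ⟨i, hi⟩
  -- the annihilating polynomial
  set P : ℂ[X] := ∏ i : Fin Nω, (X - C ((ω i : ℝ) : ℂ)) with hPdef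
  have hPmonic : P.Monic := monic_prod_of_monic _ _ fun i _ => monic_X_sub_C _
  have hPdeg : P.natDegree = Nω := by
    rw [hPdef, natDegree_prod_of_monic _ _ fun i _ => monic_X_sub_C _]
    simp
  have hP0 : Polynomial.aeval Lop P = 0 := by
    apply LinearMap.ext
    intro A
    rw [hdecomp A]
    simp only [map_sum, _root_.map_smul, LinearMap.zero_apply, smul_zero, Finset.sum_const_zero]
    apply Finset.sum_eq_zero
    intro j _
    apply Finset.sum_eq_zero
    intro k _
    have hev := end_aeval_apply' Lop _ _ (hLM j k) P
    obtain ⟨i, hi⟩ := hfreq j k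
    have hPz : P.eval ((ε j - ε k : ℝ) : ℂ) = 0 := by
      rw [hPdef, eval_prod]
      apply Finset.prod_eq_zero (Finset.mem_univ i)
      rw [hi]
      simp
    rw [hev, hPz, zero_smul, smul_zero]
  have hdvd : minpoly ℂ Lop ∣ P := minpoly.dvd ℂ Lop hP0
  have hupper : (minpoly ℂ Lop).natDegree ≤ Nω :=
    hPdeg ▸ natDegree_le_of_dvd hdvd hPmonic.ne_zero
  -- each ω i is an eigenvalue
  have hIntegral : IsIntegral ℂ Lop := Algebra.IsIntegral.isIntegral (R := ℂ) Lop
  have hmne : minpoly ℂ Lop ≠ 0 := minpoly.ne_zero hIntegral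
  have hroot : ∀ i : Fin Nω, ((ω i : ℝ) : ℂ) ∈ (minpoly ℂ Lop).roots := by
    intro i
    have : ω i ∈ Set.range ω := ⟨i, rfl⟩
    rw [hωrange] at this
    obtain ⟨m, n, hmn⟩ := this
    have hm : εd m ∈ Set.range ε := by rw [← hdrange]; exact ⟨m, rfl⟩
    have hn : εd n ∈ Set.range ε := by rw [← hdrange]; exact ⟨n, rfl⟩
    obtain ⟨j, hj⟩ := hm
    obtain ⟨k, hk⟩ := hn
    have heq : ((ω i : ℝ) : ℂ) = ((ε j - ε k : ℝ) : ℂ) := by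
      rw [hmn, ← hj, ← hk]
    have hev : Lop.HasEigenvalue ((ω i : ℝ) : ℂ) := by
      apply Module.End.hasEigenvalue_of_hasEigenvector (x := M j k)
      exact ⟨Module.End.mem_eigenspace_iff.mpr (by rw [heq]; exact hLM j k), hMne j k⟩
    rw [Polynomial.mem_roots hmne]
    exact Module.End.isRoot_of_hasEigenvalue hev
  have hlower : Nω ≤ (minpoly ℂ Lop).natDegree := by
    have hsub : Finset.univ.image (fun i : Fin Nω => ((ω i : ℝ) : ℂ))
        ⊆ (minpoly ℂ Lop).roots.toFinset := by
      intro x hx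
      obtain ⟨i, _, rfl⟩ := Finset.mem_image.mp hx
      exact Multiset.mem_toFinset.mpr (hroot i)
    have hinj : Function.Injective (fun i : Fin Nω => ((ω i : ℝ) : ℂ)) :=
      fun a b hab => hωinj (Complex.ofReal_injective hab)
    calc Nω = (Finset.univ.image (fun i : Fin Nω => ((ω i : ℝ) : ℂ))).card := by
          rw [Finset.card_image_of_injective _ hinj, Finset.card_univ, Fintype.card_fin]
      _ ≤ (minpoly ℂ Lop).roots.toFinset.card := Finset.card_le_card hsub
      _ ≤ Multiset.card (minpoly ℂ Lop).roots := Multiset.toFinset_card_le _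
      _ ≤ (minpoly ℂ Lop).natDegree := Polynomial.card_roots' _
  omega
end
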